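/- arXiv:2401.15667 — 3 statements merged into one kernel-verified Lean document; each statement's English description precedes it below -/
import Mathlib

section
/- Let $f:X\to Y$ be a continuous map between convenient spaces. Suppose $Y$ has an open cover $\mathcal{U}=\{U_i\}_{i=1}^{n+1}$ such that (1) for each $i$, the restriction $f|_{f^{-1}(U_i)}:f^{-1}(U_i)\to U_i$ admits a continuous section, and (2) $Y$ admits a partition of unity subordinate to $\mathcal{U}$. Then $\mathrm{asecat}(f)\leq n$. -/
open scoped unitInterval

noncomputable section

universe u v


/-- Presentations of probability measures with finite support: a tuple of points
together with a point of the standard simplex. This is the disjoint union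
`⨆ₙ Xⁿ × Δ^{n-1}`. -/
def PreProb (X : Type u) [TopologicalSpace X] : Type u :=
  Σ n : ℕ, (Fin (n + 1) → X) × (stdSimplex ℝ (Fin (n + 1)))

instance (X : Type u) [TopologicalSpace X] : TopologicalSpace (PreProb X) :=
  inferInstanceAs (TopologicalSpace (Σ n : ℕ, (Fin (n + 1) → X) × (stdSimplex ℝ (Fin (n + 1)))))

/-- The space of probability measures with finite support, encoded as finitely
supported real-valued functions that are nonnegative and sum to `1`.  Its topology
(defined below) is coinduced from the space of presentations, i.e. it is the quotient
topology of the paper. -/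
def FinProb (X : Type u) [TopologicalSpace X] : Type u :=
  { w : X →₀ ℝ // (∀ x, 0 ≤ w x) ∧ w.sum (fun _ t => t) = 1 }

/-- The quotient map from presentations to finitely supported probability measures,
`(x₁,…,xₙ,t₁,…,tₙ) ↦ ∑ tᵢ δ_{xᵢ}`. -/
def PreProb.toFinProb {X : Type u} [TopologicalSpace X] (p : PreProb X) : FinProb X := by
  classical
  refine ⟨∑ i, Finsupp.single (p.2.1 i) ((p.2.2 : Fin (p.1 + 1) → ℝ) i), ?_, ?_⟩
  · intro x
    rw [Finsupp.finset_sum_apply]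
    refine Finset.sum_nonneg fun i _ => ?_
    rw [Finsupp.single_apply]
    split
    · exact p.2.2.2.1 i
    · exact le_refl 0
  · rw [← Finsupp.sum_finset_sum_index (fun _ => rfl) (fun _ _ _ => rfl)]
    simpa [Finsupp.sum_single_index] using p.2.2.2.2

/-- The quotient topology on the space of probability measures with finite support. -/
instance FinProb.instTopologicalSpace (X : Type u) [TopologicalSpace X] :
    TopologicalSpace (FinProb X) :=
  TopologicalSpace.coinduced PreProb.toFinProb inferInstance

/-- The weight that a finitely supported probability measure assigns to a point. -/
def FinProb.weight {X : Type u} [TopologicalSpace X] (μ : FinProb X) (x : X) : ℝ := μ.1 x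

/-- The support of a finitely supported probability measure, as a finset. -/
def FinProb.supp {X : Type u} [TopologicalSpace X] (μ : FinProb X) : Finset X := μ.1.support

/-- `𝒫ₙ(X)`: the subspace of measures supported on at most `n` points. -/
def FinProbLe (X : Type u) [TopologicalSpace X] (n : ℕ) : Set (FinProb X) :=
  { μ | μ.supp.card ≤ n }

/-- Covariant functoriality: the pushforward `f₊ : 𝒫(X) → 𝒫(Y)`,
`∑ tᵢ δ_{xᵢ} ↦ ∑ tᵢ δ_{f xᵢ}`. -/
def FinProb.map {X : Type u} {Y : Type v} [TopologicalSpace X] [TopologicalSpace Y]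
    (f : X → Y) (μ : FinProb X) : FinProb Y := by
  classical
  refine ⟨Finsupp.mapDomain f μ.1, ?_, ?_⟩
  · intro y
    rw [Finsupp.mapDomain, Finsupp.sum_apply]
    refine Finset.sum_nonneg fun x _ => ?_
    dsimp only
    rw [Finsupp.single_apply]
    split
    · exact μ.2.1 x
    · exact le_refl 0
  · rw [Finsupp.sum_mapDomain_index (fun _ => rfl) (fun _ _ _ => rfl)]
    exact μ.2.2

/-- The Dirac measure `δ_x`, i.e. the unit `η` of the monad `𝒫`. -/
def FinProb.dirac {X : Type u} [TopologicalSpace X] (x : X) : FinProb X := by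
  classical
  refine ⟨Finsupp.single x 1, ?_, ?_⟩
  · intro y
    rw [Finsupp.single_apply]
    split
    · exact zero_le_one
    · exact le_refl 0
  · rw [Finsupp.sum_single_index rfl]

/-- `𝒫(f)`: the space of `f`-relative probability measures of finite support, i.e. those
measures on `X` whose support is mapped by `f` to a single point of `Y`. -/
def FinProbRel {X : Type u} {Y : Type v} [TopologicalSpace X] (f : X → Y) :
    Set (FinProb X) :=
  { μ | ∃ y : Y, f '' ↑μ.supp = {y} }

/-- The projection `p : 𝒫(f) → Y`, sending a relative measure to the unique point of
`f(supp μ)`. -/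
def FinProbRel.proj {X : Type u} {Y : Type v} [TopologicalSpace X] (f : X → Y)
    (μ : FinProbRel f) : Y :=
  Exists.choose μ.2

/-- The projection `𝒫(f) → Y` admits a continuous section with image in `𝒫_{n+1}(f)`. -/
def HasAnalogSec {X : Type u} {Y : Type v} [TopologicalSpace X] [TopologicalSpace Y]
    (f : X → Y) (n : ℕ) : Prop :=
  ∃ s : Y → FinProbRel f, Continuous s ∧ (∀ y, FinProbRel.proj f (s y) = y) ∧
    ∀ y, (s y : FinProb X).supp.card ≤ n + 1

/-- The analog sectional category of a map: the least `n` such that the projection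
`𝒫(f) → Y` admits a continuous section with image in `𝒫_{n+1}(f)` (`⊤` if there is
no such `n`). -/
def asecat {X : Type u} {Y : Type v} [TopologicalSpace X] [TopologicalSpace Y]
    (f : X → Y) : ℕ∞ :=
  sInf { n : ℕ∞ | ∃ m : ℕ, (m : ℕ∞) = n ∧ HasAnalogSec f m }

/-- Evaluation of paths at the `r` equally spaced times `i/(r-1)`, `0 ≤ i < r`:
the fibration `π_X^r : X^{[0,1]} → X^r`. -/
def pathEval (X : Type u) [TopologicalSpace X] (r : ℕ) : C(I, X) → (Fin r → X) :=
  fun γ i => γ (Set.projIcc (0 : ℝ) 1 zero_le_one ((i : ℝ) / ((r : ℝ) - 1)))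

/-- The based path space `(X, x₀)^{([0,1],{0})}`. -/
def BasedPaths (X : Type u) [TopologicalSpace X] (x₀ : X) : Type u :=
  { γ : C(I, X) // γ 0 = x₀ }

instance (X : Type u) [TopologicalSpace X] (x₀ : X) : TopologicalSpace (BasedPaths X x₀) :=
  inferInstanceAs (TopologicalSpace { γ : C(I, X) // γ 0 = x₀ })

/-- Evaluation at `1` on the based path space. -/
def basedPathEval (X : Type u) [TopologicalSpace X] (x₀ : X) : BasedPaths X x₀ → X :=
  fun γ => γ.1 1

/-- The analog (LS-)category of a space. -/
def acat (X : Type u) [TopologicalSpace X] (x₀ : X) : ℕ∞ :=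
  asecat (basedPathEval X x₀)

/-- The `r`-th sequential analog topological complexity; `ATC₁ = acat`. -/
def ATC (X : Type u) [TopologicalSpace X] (x₀ : X) (r : ℕ) : ℕ∞ :=
  if r = 1 then acat X x₀ else asecat (pathEval X r)

/-- Classical sectional category data: `f` admits continuous sections over each of
`n + 1` open sets covering `Y`. -/
def HasSecCover {X : Type u} {Y : Type v} [TopologicalSpace X] [TopologicalSpace Y]
    (f : X → Y) (n : ℕ) : Prop :=
  ∃ U : Fin (n + 1) → Set Y, (∀ i, IsOpen (U i)) ∧ (⋃ i, U i) = Set.univ ∧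
    ∀ i, ∃ s : U i → X, Continuous s ∧ ∀ y : U i, f (s y) = (y : Y)

/-- The classical sectional category (Schwarz genus) of a map. -/
def secat {X : Type u} {Y : Type v} [TopologicalSpace X] [TopologicalSpace Y]
    (f : X → Y) : ℕ∞ :=
  sInf { n : ℕ∞ | ∃ m : ℕ, (m : ℕ∞) = n ∧ HasSecCover f m }

/-- The classical Lusternik–Schnirelmann category (normalized: `cat(point) = 0`). -/
def catLS (X : Type u) [TopologicalSpace X] (x₀ : X) : ℕ∞ :=
  secat (basedPathEval X x₀)

/-- The classical `r`-th sequential topological complexity. -/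
def seqTC (X : Type u) [TopologicalSpace X] (x₀ : X) (r : ℕ) : ℕ∞ :=
  if r = 1 then catLS X x₀ else secat (pathEval X r)

/-- The cohomological dimension of a group `G`: the least `n` (possibly `⊤`) such that the
group cohomology `Hᵏ(G; M)` vanishes for all `G`-modules `M` and all `k > n`. -/
def groupCd (G : Type) [Group G] : ℕ∞ :=
  sInf { n : ℕ∞ | ∀ (M : Rep ℤ G) (k : ℕ), n < (k : ℕ∞) → Subsingleton (groupCohomology M k) }

/-- `B` (with basepoint `b`) is a classifying space for the discrete group `G`: a convenient
(compactly generated Hausdorff), path-connected, aspherical space with fundamental group `G`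
and the homotopy type of a CW complex; this characterizes the geometric realization of the
nerve of `G` up to homotopy equivalence. -/
structure IsClassifyingSpace (G : Type) [Group G] (B : Type u) [TopologicalSpace B]
    (b : B) : Prop where
  t2 : T2Space B
  compactlyGenerated : CompactlyGeneratedSpace B
  pathConnected : PathConnectedSpace B
  aspherical : ∀ n : ℕ, 2 ≤ n → Subsingleton (HomotopyGroup (Fin n) B b)
  pi1 : Nonempty (FundamentalGroup B b ≃* G)
  cwType : ∃ K : TopCat.{u}, Nonempty (TopCat.CWComplex K) ∧ Nonempty (ContinuousMap.HomotopyEquiv B K)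

/-- A covering map of degree `k`: every fiber has exactly `k` points. -/
def IsCoveringOfDegree {E : Type u} {X : Type v} [TopologicalSpace E] [TopologicalSpace X]
    (p : E → X) (k : ℕ) : Prop :=
  IsCoveringMap p ∧ ∀ x, (p ⁻¹' {x}).encard = (k : ℕ∞)

/-- Hurewicz fibration: the homotopy lifting property with respect to all spaces. -/
def IsHurewiczFibration {E : Type u} {B : Type v} [TopologicalSpace E] [TopologicalSpace B]
    (p : E → B) : Prop :=
  ∀ (Z : Type max u v) (_ : TopologicalSpace Z) (H : C(Z × I, B)) (h : C(Z, E)),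
    (∀ z, p (h z) = H (z, 0)) →
      ∃ L : C(Z × I, E), (∀ z, L (z, 0) = h z) ∧ ∀ q, p (L q) = H q
/-- If `Y` has an open cover by `n + 1` sets over each of which `f` admits a continuous
section, and `Y` admits a partition of unity subordinate to this cover, then the analog
sectional category of `f` is at most `n`. -/
theorem asecat_le_of_cover_and_partitionOfUnity {X : Type u} {Y : Type v}
    [TopologicalSpace X] [TopologicalSpace Y] [T2Space X] [T2Space Y]
    [CompactlyGeneratedSpace X] [CompactlyGeneratedSpace Y]
    (f : X → Y) (n : ℕ) (U : Fin (n + 1) → Set Y)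
    (hUopen : ∀ i, IsOpen (U i)) (hUcover : ⋃ i, U i = Set.univ)
    (hsec : ∀ i, ∃ s : U i → X, Continuous s ∧ ∀ y : U i, f (s y) = (y : Y))
    (φ : Fin (n + 1) → Y → ℝ) (hφcont : ∀ i, Continuous (φ i))
    (hφnonneg : ∀ i y, 0 ≤ φ i y) (hφsum : ∀ y, ∑ i, φ i y = 1)
    (hφsupp : ∀ i, tsupport (φ i) ⊆ U i) :
    asecat f ≤ (n : ℕ∞) := by
  classical
  choose sec hsec_cont hsec_eq using hsec
  have hφzero : ∀ i y, y ∉ U i → φ i y = 0 := by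
    intro i y hy
    by_contra h
    exact hy (hφsupp i (subset_closure (by simpa [Function.mem_support] using h)))
  set w : Y → (X →₀ ℝ) := fun y =>
    ∑ i, if h : y ∈ U i then Finsupp.single (sec i ⟨y, h⟩) (φ i y) else 0 with hw
  have hnonneg : ∀ y x, 0 ≤ w y x := by
    intro y x
    simp only [hw]
    simp only [Finsupp.finset_sum_apply]
    refine Finset.sum_nonneg fun i _ => ?_
    split
    · rw [Finsupp.single_apply]
      split
      · exact hφnonneg i y
      · exact le_refl 0
    · simp
  have hsum1 : ∀ y, (w y).sum (fun _ t => t) = 1 := by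
    intro y
    simp only [hw]
    rw [← Finsupp.sum_finset_sum_index (fun _ => rfl) (fun _ _ _ => rfl)]
    have : ∀ i : Fin (n + 1),
        (if h : y ∈ U i then Finsupp.single (sec i ⟨y, h⟩) (φ i y) else 0).sum
          (fun _ t => t) = φ i y := by
      intro i
      split
      case isTrue h => rw [Finsupp.sum_single_index rfl]
      case isFalse h => simp [hφzero i y h]
    rw [Finset.sum_congr rfl fun i _ => this i]
    exact hφsum y
  have hsupp_f : ∀ y x, x ∈ (w y).support → f x = y := by
    intro y x hx
    rw [Finsupp.mem_support_iff] at hx; simp only [hw] at hx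
    simp only [Finsupp.finset_sum_apply] at hx
    obtain ⟨i, -, hi⟩ := Finset.exists_ne_zero_of_sum_ne_zero hx
    by_cases h : y ∈ U i
    · rw [dif_pos h, Finsupp.single_apply] at hi
      split at hi
      · subst ‹sec i ⟨y, h⟩ = x›
        exact hsec_eq i ⟨y, h⟩
      · exact absurd rfl hi
    · rw [dif_neg h] at hi
      exact absurd rfl hi
  have hsupp_ne : ∀ y, ((w y).support : Finset X).Nonempty := by
    intro y
    rcases Finset.eq_empty_or_nonempty (w y).support with h | h
    · exfalso
      have : w y = 0 := Finsupp.support_eq_empty.mp h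
      have h1 := hsum1 y
      rw [this] at h1
      simp [Finsupp.sum] at h1
    · exact h
  -- the global section
  set G : Y → FinProb X := fun y => ⟨w y, hnonneg y, hsum1 y⟩ with hG
  have himg : ∀ y, f '' ↑((G y).supp) = {y} := by
    intro y
    refine Set.eq_singleton_iff_nonempty_unique_mem.mpr ⟨?_, ?_⟩
    · obtain ⟨x, hx⟩ := hsupp_ne y
      exact ⟨f x, Set.mem_image_of_mem f (by exact_mod_cast hx)⟩
    · rintro _ ⟨x, hx, rfl⟩
      exact hsupp_f y x (by exact_mod_cast hx)
  have hrel : ∀ y, G y ∈ FinProbRel f := fun y => ⟨y, himg y⟩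
  set g : Y → FinProbRel f := fun y => ⟨G y, hrel y⟩ with hg
  have hproj : ∀ y, FinProbRel.proj f (g y) = y := by
    intro y
    have hspec : f '' ↑((g y : FinProb X).supp) = {FinProbRel.proj f (g y)} :=
      Exists.choose_spec (g y).2
    exact Set.singleton_eq_singleton_iff.mp (hspec.symm.trans (himg y))
  have hcard : ∀ y, ((g y : FinProb X).supp).card ≤ n + 1 := by
    intro y
    have h1 : (w y).support ⊆ Finset.univ.biUnion fun i =>
        (if h : y ∈ U i then Finsupp.single (sec i ⟨y, h⟩) (φ i y) else 0).support := by
      simp only [hw]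
      exact Finsupp.support_finset_sum
    calc (w y).support.card ≤ _ := Finset.card_le_card h1
      _ ≤ ∑ i : Fin (n + 1),
          (if h : y ∈ U i then Finsupp.single (sec i ⟨y, h⟩) (φ i y) else 0).support.card :=
        Finset.card_biUnion_le
      _ ≤ ∑ _i : Fin (n + 1), 1 := by
          refine Finset.sum_le_sum fun i _ => ?_
          split
          · calc _ ≤ ({(sec i ⟨y, ‹_›⟩)} : Finset X).card :=
                Finset.card_le_card Finsupp.support_single_subset
              _ = 1 := Finset.card_singleton _
          · simp
      _ = n + 1 := by simp
  have hgcont : Continuous g := by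
    refine Continuous.subtype_mk ?_ _
    rw [continuous_iff_continuousAt]
    intro y₀
    obtain ⟨i₀, hi₀⟩ : ∃ i, y₀ ∈ U i := by
      have : y₀ ∈ ⋃ i, U i := hUcover ▸ Set.mem_univ y₀
      simpa using this
    set W : Set Y := ⋂ j, if y₀ ∈ U j then U j else (tsupport (φ j))ᶜ with hWdef
    have hWopen : IsOpen W := by
      refine isOpen_iInter_of_finite fun j => ?_
      split
      · exact hUopen j
      · exact (isClosed_tsupport _).isOpen_compl
    have hy₀W : y₀ ∈ W := by
      refine Set.mem_iInter.mpr fun j => ?_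
      split
      case isTrue h => exact h
      case isFalse h => exact fun hc => h (hφsupp j hc)
    have hWU : ∀ j, y₀ ∈ U j → ∀ y ∈ W, y ∈ U j := by
      intro j hj y hy
      have := Set.mem_iInter.mp hy j
      rwa [if_pos hj] at this
    have hWz : ∀ j, y₀ ∉ U j → ∀ y ∈ W, φ j y = 0 := by
      intro j hj y hy
      have := Set.mem_iInter.mp hy j
      rw [if_neg hj] at this
      by_contra h
      exact this (subset_closure (by simpa [Function.mem_support] using h))
    have hsub : ContinuousOn G W := by
      rw [continuousOn_iff_continuous_restrict]
      set F : W → PreProb X := fun y =>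
        ⟨n, fun j => if h : y₀ ∈ U j then sec j ⟨(y : Y), hWU j h y y.2⟩
              else sec i₀ ⟨(y : Y), hWU i₀ hi₀ y y.2⟩,
          ⟨fun i => φ i y, fun i => hφnonneg i y, hφsum y⟩⟩ with hF
      have hFcont : Continuous F := by
        refine continuous_sigmaMk.comp (Continuous.prodMk ?_ ?_)
        · refine continuous_pi fun j => ?_
          split
          · exact (hsec_cont j).comp
              (Continuous.subtype_mk continuous_subtype_val _)
          · exact (hsec_cont i₀).comp
              (Continuous.subtype_mk continuous_subtype_val _)
        · exact Continuous.subtype_mk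
            (continuous_pi fun i => (hφcont i).comp continuous_subtype_val) _
      have heq : W.restrict G = PreProb.toFinProb ∘ F := by
        funext y
        apply Subtype.ext
        show (G (y : Y)).1 = (PreProb.toFinProb (F y)).1
        simp only [hG]
        have hrhs : (PreProb.toFinProb (F y)).1
            = ∑ i : Fin (n + 1), Finsupp.single ((F y).2.1 i) (φ i (y : Y)) := rfl
        rw [hrhs]; simp only [hw]
        refine Finset.sum_congr rfl fun i _ => ?_
        by_cases h : y₀ ∈ U i
        · rw [dif_pos (hWU i h y y.2)]
          show _ = Finsupp.single (dite (y₀ ∈ U i) (fun h' => sec i ⟨(y : Y), hWU i h' y y.2⟩)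
            (fun _ => sec i₀ ⟨(y : Y), hWU i₀ hi₀ y y.2⟩)) _
          rw [dif_pos h]
        · have hz : φ i (y : Y) = 0 := hWz i h y y.2
          rw [hz]
          simp only [hF, Finsupp.single_zero]
          split <;> rfl
      rw [show W.domRestrict G = PreProb.toFinProb ∘ F from heq]
      exact continuous_coinduced_rng.comp hFcont
    exact hsub.continuousAt (hWopen.mem_nhds hy₀W)
  have hmem : (n : ℕ∞) ∈ {m : ℕ∞ | ∃ k : ℕ, (k : ℕ∞) = m ∧ HasAnalogSec f k} :=
    ⟨n, rfl, g, hgcont, hproj, hcard⟩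
  exact sInf_le hmem

end
end

section
/- Let $f:X\to Y$ be a continuous map between convenient spaces. If $Y$ is paracompact, then $\mathrm{asecat}(f)\leq \mathrm{secat}(f)$, where $\mathrm{secat}(f)$ is the classical sectional category (Schwarz genus) of $f$. -/
open scoped unitInterval

noncomputable section

universe u v


/-- The quotient map to `FinProb` is continuous. -/
theorem continuous_toFinProb {X : Type u} [TopologicalSpace X] :
    Continuous (PreProb.toFinProb (X := X)) :=
  continuous_coinduced_rng

theorem toFinProb_coe {X : Type u} [TopologicalSpace X] (p : PreProb X) :
    (PreProb.toFinProb p).1 = ∑ i, Finsupp.single (p.2.1 i) (p.2.2.1 i) := rfl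

theorem hasAnalogSec_of_hasSecCover {X : Type u} {Y : Type v}
    [TopologicalSpace X] [TopologicalSpace Y] [T2Space Y]
    [ParacompactSpace Y] (f : X → Y) (n : ℕ) (h : HasSecCover f n) :
    HasAnalogSec f n := by
  classical
  obtain ⟨U, hUo, hUc, hsec⟩ := h
  by_cases hY : Nonempty Y
  swap
  · have hYe : IsEmpty Y := not_nonempty_iff.mp hY
    exact ⟨fun y => isEmptyElim y,
      continuous_def.mpr fun s _ => by
        convert isOpen_empty using 1
        exact Set.eq_empty_of_isEmpty _,
      fun y => isEmptyElim y, fun y => isEmptyElim y⟩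
  have hX : Nonempty X := by
    obtain ⟨y⟩ := hY
    have hy : y ∈ ⋃ i, U i := hUc ▸ Set.mem_univ y
    obtain ⟨i, hi⟩ := Set.mem_iUnion.mp hy
    obtain ⟨s, -, -⟩ := hsec i
    exact ⟨s ⟨y, hi⟩⟩
  choose sec hsecCont hsecEq using hsec
  obtain ⟨φ, hφ⟩ := PartitionOfUnity.exists_isSubordinate (s := (Set.univ : Set Y))
    isClosed_univ U hUo (by rw [hUc])
  -- extended sections
  set e : Fin (n + 1) → Y → X := fun i z =>
    if h : z ∈ U i then sec i ⟨z, h⟩ else Classical.arbitrary X with he_def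
  have hsum : ∀ z : Y, ∑ i, φ i z = 1 := fun z => by
    rw [← finsum_eq_sum_of_fintype]
    exact φ.sum_eq_one (Set.mem_univ z)
  have hmem : ∀ z : Y, (fun i => φ i z) ∈ stdSimplex ℝ (Fin (n + 1)) :=
    fun z => ⟨fun i => φ.nonneg i z, hsum z⟩
  set P : Y → PreProb X := fun z => ⟨n, fun i => e i z, ⟨fun i => φ i z, hmem z⟩⟩ with hP
  set sig : Y → FinProb X := fun z => PreProb.toFinProb (P z) with hsig
  have hsig_coe : ∀ z, (sig z).1 = ∑ i, Finsupp.single (e i z) (φ i z) := fun z => rfl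
  have he_eq : ∀ (i : Fin (n + 1)) (z : Y) (hz : z ∈ U i), e i z = sec i ⟨z, hz⟩ :=
    fun i z hz => dif_pos hz
  have hφU : ∀ (i : Fin (n + 1)) (z : Y), φ i z ≠ 0 → z ∈ U i := fun i z hz =>
    hφ i (subset_tsupport _ hz)
  -- support membership
  have hsupp_mem : ∀ z x, x ∈ (sig z).supp → ∃ i, e i z = x ∧ φ i z ≠ 0 := by
    intro z x hx
    have hx' : (sig z).1 x ≠ 0 := Finsupp.mem_support_iff.mp hx
    rw [hsig_coe, Finsupp.finset_sum_apply] at hx'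
    obtain ⟨i, -, hi⟩ := Finset.exists_ne_zero_of_sum_ne_zero hx'
    rw [Finsupp.single_apply] at hi
    by_cases hix : e i z = x
    · exact ⟨i, hix, by simpa [hix] using hi⟩
    · simp [hix] at hi
  -- projection of support
  have hf_supp : ∀ z x, x ∈ (sig z).supp → f x = z := by
    intro z x hx
    obtain ⟨i, hix, hiφ⟩ := hsupp_mem z x hx
    have hz : z ∈ U i := hφU i z hiφ
    rw [← hix, he_eq i z hz, hsecEq i ⟨z, hz⟩]
  -- support nonempty
  have hsupp_ne : ∀ z, ((sig z).supp : Set X).Nonempty := by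
    intro z
    rcases Finset.eq_empty_or_nonempty (sig z).supp with h0 | h1
    · exfalso
      have : (sig z).1 = 0 := Finsupp.support_eq_empty.mp h0
      have h1 : (sig z).1.sum (fun _ t => t) = 1 := (sig z).2.2
      rw [this, Finsupp.sum_zero_index] at h1
      exact one_ne_zero h1.symm
    · exact ⟨h1.choose, h1.choose_spec⟩
  have himg : ∀ z, f '' ↑(sig z).supp = {z} := by
    intro z
    apply Set.eq_singleton_iff_unique_mem.mpr
    constructor
    · obtain ⟨x, hx⟩ := hsupp_ne z
      exact ⟨x, hx, hf_supp z x hx⟩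
    · rintro w ⟨x, hx, rfl⟩
      exact hf_supp z x hx
  have hrel : ∀ z, sig z ∈ FinProbRel f := fun z => ⟨z, himg z⟩
  -- support cardinality
  have hcard : ∀ z, (sig z).supp.card ≤ n + 1 := by
    intro z
    have hsub : (sig z).supp ⊆ Finset.univ.image (fun i => e i z) := by
      intro x hx
      obtain ⟨i, hix, -⟩ := hsupp_mem z x hx
      exact Finset.mem_image.mpr ⟨i, Finset.mem_univ i, hix⟩
    calc (sig z).supp.card ≤ (Finset.univ.image (fun i => e i z)).card :=
          Finset.card_le_card hsub
      _ ≤ Finset.univ.card := Finset.card_image_le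
      _ = n + 1 := by simp
  -- continuity
  have hcont : Continuous sig := by
    rw [continuous_iff_continuousAt]
    intro y
    set T : Finset (Fin (n + 1)) := Finset.univ.filter (fun i => y ∈ tsupport (φ i)) with hT
    have hTne : T.Nonempty := by
      have h1 : (1 : ℝ) ≠ 0 := one_ne_zero
      have := hsum y
      rw [← this] at h1
      obtain ⟨i, -, hi⟩ := Finset.exists_ne_zero_of_sum_ne_zero h1
      exact ⟨i, Finset.mem_filter.mpr ⟨Finset.mem_univ i, subset_tsupport _ hi⟩⟩
    set W : Set Y := (⋂ i ∈ T, U i) ∩ (⋂ i ∈ Tᶜ, (tsupport (φ i))ᶜ) with hW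
    have hWopen : IsOpen W := by
      apply IsOpen.inter
      · exact isOpen_biInter_finset fun i _ => hUo i
      · exact isOpen_biInter_finset fun i _ => (isClosed_tsupport _).isOpen_compl
    have hyW : y ∈ W := by
      constructor
      · refine Set.mem_biInter fun i hi => ?_
        exact hφ i (Finset.mem_filter.mp hi).2
      · refine Set.mem_biInter fun i hi => ?_
        have := (Finset.mem_filter.not.mp (Finset.mem_compl.mp hi))
        simpa using this
    have hWU : ∀ i ∈ T, ∀ z ∈ W, z ∈ U i := by
      intro i hi z hz
      exact Set.mem_iInter₂.mp hz.1 i hi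
    have hWzero : ∀ z ∈ W, ∀ i, i ∉ T → φ i z = 0 := by
      intro z hz i hi
      have : z ∈ (tsupport (φ i))ᶜ :=
        Set.mem_iInter₂.mp hz.2 i (Finset.mem_compl.mpr hi)
      exact image_eq_zero_of_notMem_tsupport this
    -- enumerate T
    obtain ⟨m, hm⟩ : ∃ m : ℕ, m + 1 = T.card :=
      ⟨T.card - 1, Nat.succ_pred_eq_of_pos (Finset.card_pos.mpr hTne)⟩
    set ee : Fin (m + 1) ≃ T := (finCongr hm).trans T.equivFin.symm with hee
    set ι : Fin (m + 1) → Fin (n + 1) := fun j => (ee j : Fin (n + 1)) with hι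
    have hιT : ∀ j, ι j ∈ T := fun j => (ee j).2
    -- sum over T of any g equals sum over the enumeration
    have hsum_reindex : ∀ g : Fin (n + 1) → ℝ,
        ∑ j : Fin (m + 1), g (ι j) = ∑ i ∈ T, g i := by
      intro g
      rw [← Finset.sum_coe_sort T g]
      exact Equiv.sum_comp ee (fun t : T => g t)
    have hsum_reindexF : ∀ g : Fin (n + 1) → (X →₀ ℝ),
        ∑ j : Fin (m + 1), g (ι j) = ∑ i ∈ T, g i := by
      intro g
      rw [← Finset.sum_coe_sort T g]
      exact Equiv.sum_comp ee (fun t : T => g t)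
    have hsumW : ∀ z ∈ W, ∑ j : Fin (m + 1), φ (ι j) z = 1 := by
      intro z hz
      rw [hsum_reindex (fun i => φ i z)]
      rw [Finset.sum_subset (Finset.subset_univ T) (fun i _ hi => hWzero z hz i hi)]
      exact hsum z
    -- local presentation
    have hmemW : ∀ z : W, (fun j => φ (ι j) (z : Y)) ∈ stdSimplex ℝ (Fin (m + 1)) :=
      fun z => ⟨fun j => φ.nonneg _ _, hsumW z z.2⟩
    set P' : W → PreProb X := fun z =>
      ⟨m, fun j => sec (ι j) ⟨(z : Y), hWU (ι j) (hιT j) z z.2⟩,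
        ⟨fun j => φ (ι j) (z : Y), hmemW z⟩⟩ with hP'
    have hP'cont : Continuous P' := by
      apply Continuous.comp continuous_sigmaMk
      apply Continuous.prodMk
      · refine continuous_pi fun j => ?_
        have hsub : W ⊆ U (ι j) := fun z hz => hWU (ι j) (hιT j) z hz
        exact (hsecCont (ι j)).comp (continuous_inclusion hsub)
      · refine Continuous.subtype_mk ?_ _
        exact continuous_pi fun j => (φ (ι j)).continuous.comp continuous_subtype_val
    have hrestrict : ∀ z : W, sig (z : Y) = PreProb.toFinProb (P' z) := by
      intro z
      apply Subtype.ext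
      rw [hsig_coe, toFinProb_coe]
      have : ∀ j : Fin (m + 1),
          Finsupp.single ((P' z).2.1 j) ((P' z).2.2.1 j)
            = Finsupp.single (e (ι j) (z : Y)) (φ (ι j) (z : Y)) := by
        intro j
        have hz : (z : Y) ∈ U (ι j) := hWU (ι j) (hιT j) z z.2
        rw [he_eq (ι j) (z : Y) hz]
      rw [Finset.sum_congr rfl (fun j _ => this j),
        hsum_reindexF (fun i => Finsupp.single (e i (z : Y)) (φ i (z : Y)))]
      refine (Finset.sum_subset (Finset.subset_univ T) ?_).symm
      intro i _ hi
      rw [hWzero z z.2 i hi, Finsupp.single_zero]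
    have : ContinuousOn sig W := by
      rw [continuousOn_iff_continuous_restrict]
      have heq : W.restrict sig = PreProb.toFinProb ∘ P' := funext fun z => hrestrict z
      refine (congrArg Continuous heq).mpr ?_
      exact continuous_toFinProb.comp hP'cont
    exact this.continuousAt (hWopen.mem_nhds hyW)
  -- assemble
  refine ⟨fun z => ⟨sig z, hrel z⟩, hcont.subtype_mk _, ?_, fun z => hcard z⟩
  intro z
  exact Set.singleton_eq_singleton_iff.mp
    ((Exists.choose_spec (hrel z)).symm.trans (himg z))

/-- If `Y` is paracompact, then the analog sectional category of any map `f : X → Y` is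
bounded above by its classical sectional category (Schwarz genus). -/
theorem asecat_le_secat {X : Type u} {Y : Type v}
    [TopologicalSpace X] [TopologicalSpace Y] [T2Space X] [T2Space Y]
    [CompactlyGeneratedSpace X] [CompactlyGeneratedSpace Y]
    [ParacompactSpace Y] (f : X → Y) :
    asecat f ≤ secat f := by
  apply sInf_le_sInf
  rintro N ⟨m, rfl, hm⟩
  exact ⟨m, rfl, hasAnalogSec_of_hasSecCover f m hm⟩

end
end

section
/- Let $p:E\to X$ be a covering map of degree $k$ between convenient spaces. The assignment $\mu\mapsto \frac{1}{k}\sum_{x\in\mathrm{supp}(\mu)}\sum_{\tilde x\in p^{-1}(x)}\mu(x)\,\delta_{\tilde x}$ defines a continuous map $p^*:\mathcal{P}(X)\to\mathcal{P}(E)$ which is a section of $p_*:\mathcal{P}(E)\to\mathcal{P}(X)$, i.e. $p_*\circ p^*=\mathrm{id}_{\mathcal{P}(X)}$; moreover $p^*(\mathcal{P}_n(X))\subseteq\mathcal{P}_{kn}(E)$. -/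
open scoped unitInterval

noncomputable section

universe u v


/-- The pullback of measures along a degree-`k` covering map:
`μ ↦ (1/k) ∑_{x ∈ supp μ} ∑_{x̃ ∈ p⁻¹(x)} μ(x) δ_{x̃}`. -/
def coveringPullback {E : Type u} {X : Type v} [TopologicalSpace E] [TopologicalSpace X]
    (p : E → X) (k : ℕ) (hk : 0 < k) (hp : ∀ x, (p ⁻¹' {x}).encard = (k : ℕ∞))
    (μ : FinProb X) : FinProb E := by
  classical
  refine ⟨μ.1.sum fun x t => ∑ e ∈ (Set.finite_of_encard_eq_coe (hp x)).toFinset,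
      Finsupp.single e (t / k), ?_, ?_⟩
  · intro e
    rw [Finsupp.sum_apply]
    refine Finset.sum_nonneg fun x _ => ?_
    dsimp only
    rw [Finsupp.finset_sum_apply]
    refine Finset.sum_nonneg fun e' _ => ?_
    rw [Finsupp.single_apply]
    split
    · exact div_nonneg (μ.2.1 x) (Nat.cast_nonneg k)
    · exact le_refl 0
  · have h1 : ∀ (x : X) (t : ℝ),
        (∑ e ∈ (Set.finite_of_encard_eq_coe (hp x)).toFinset,
          Finsupp.single e (t / k)).sum (fun _ u => u) = t := by
      intro x t
      rw [← Finsupp.sum_finset_sum_index (fun _ => rfl) (fun _ _ _ => rfl)]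
      have hcard : ((Set.finite_of_encard_eq_coe (hp x)).toFinset.card : ℕ∞) = k := by
        rw [← Set.encard_coe_eq_coe_finsetCard, Set.Finite.coe_toFinset]
        exact hp x
      have hcard' : (Set.finite_of_encard_eq_coe (hp x)).toFinset.card = k := by
        exact_mod_cast hcard
      calc (∑ e ∈ (Set.finite_of_encard_eq_coe (hp x)).toFinset,
              (Finsupp.single e (t / k)).sum fun _ u => u)
          = ∑ _e ∈ (Set.finite_of_encard_eq_coe (hp x)).toFinset, t / k := by
            refine Finset.sum_congr rfl fun e _ => ?_
            rw [Finsupp.sum_single_index rfl]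
        _ = (Set.finite_of_encard_eq_coe (hp x)).toFinset.card • (t / k) :=
            Finset.sum_const _
        _ = t := by
            rw [hcard', nsmul_eq_mul, mul_div_assoc', mul_comm, mul_div_assoc,
              div_self (by exact_mod_cast hk.ne' : (k : ℝ) ≠ 0), mul_one]
    rw [Finsupp.sum_sum_index (fun _ => rfl) (fun _ _ _ => rfl)]
    calc μ.1.sum (fun x t =>
            (∑ e ∈ (Set.finite_of_encard_eq_coe (hp x)).toFinset,
              Finsupp.single e (t / k)).sum fun _ u => u)
        = μ.1.sum fun _ t => t := Finsupp.sum_congr fun x _ => h1 x (μ.1 x)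
      _ = 1 := μ.2.2
section Aux
variable {E : Type u} {X : Type v} [TopologicalSpace E] [TopologicalSpace X]

omit [TopologicalSpace E] [TopologicalSpace X] in
lemma fiber_card (p : E → X) (k : ℕ) (hp : ∀ x, (p ⁻¹' {x}).encard = (k : ℕ∞)) (x : X) :
    (Set.finite_of_encard_eq_coe (hp x)).toFinset.card = k := by
  have : ((Set.finite_of_encard_eq_coe (hp x)).toFinset.card : ℕ∞) = k := by
    rw [← Set.encard_coe_eq_coe_finsetCard, Set.Finite.coe_toFinset]
    exact hp x
  exact_mod_cast this

lemma coveringPullback_weight (p : E → X) (k : ℕ) (hk : 0 < k)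
    (hp : ∀ x, (p ⁻¹' {x}).encard = (k : ℕ∞)) (μ : FinProb X) (e : E) :
    (coveringPullback p k hk hp μ).1 e = μ.1 (p e) / k := by
  classical
  have h1 : (coveringPullback p k hk hp μ).1 =
      μ.1.sum fun x t => ∑ e' ∈ (Set.finite_of_encard_eq_coe (hp x)).toFinset,
        Finsupp.single e' (t / k) := rfl
  rw [h1, Finsupp.sum_apply]
  have h2 : ∀ x (t : ℝ), (∑ e' ∈ (Set.finite_of_encard_eq_coe (hp x)).toFinset,
      Finsupp.single e' (t / k)) e = if x = p e then t / k else 0 := by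
    intro x t
    rw [Finsupp.finset_sum_apply]
    simp only [Finsupp.single_apply]
    rw [Finset.sum_ite_eq' _ e (fun _ => t / k)]
    simp [Set.Finite.mem_toFinset, eq_comm]
  have h3 : (μ.1.sum fun x t => (∑ e' ∈ (Set.finite_of_encard_eq_coe (hp x)).toFinset,
        Finsupp.single e' (t / k)) e)
      = μ.1.sum fun x t => if x = p e then t / k else 0 :=
    Finsupp.sum_congr fun x _ => h2 x (μ.1 x)
  rw [h3, Finsupp.sum_ite_eq' μ.1 (p e) (fun _ t => t / k)]
  split
  · rfl
  · next h =>
    rw [Finsupp.notMem_support_iff.mp h, zero_div]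
end Aux
section Aux2
variable {E : Type u} {X : Type v} [TopologicalSpace E] [TopologicalSpace X]

lemma coveringPullback_map (p : E → X) (k : ℕ) (hk : 0 < k)
    (hp : ∀ x, (p ⁻¹' {x}).encard = (k : ℕ∞)) (μ : FinProb X) :
    FinProb.map p (coveringPullback p k hk hp μ) = μ := by
  classical
  apply Subtype.ext
  show Finsupp.mapDomain p (coveringPullback p k hk hp μ).1 = μ.1
  have h1 : (coveringPullback p k hk hp μ).1 =
      μ.1.sum fun x t => ∑ e' ∈ (Set.finite_of_encard_eq_coe (hp x)).toFinset,
        Finsupp.single e' (t / k) := rfl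
  rw [h1]
  rw [show (Finsupp.mapDomain p : (E →₀ ℝ) → (X →₀ ℝ)) =
    (Finsupp.mapDomain.addMonoidHom p : (E →₀ ℝ) →+ (X →₀ ℝ)) from rfl]
  rw [map_finsuppSum]
  have h2 : ∀ x (t : ℝ),
      (Finsupp.mapDomain.addMonoidHom p : (E →₀ ℝ) →+ (X →₀ ℝ))
        (∑ e' ∈ (Set.finite_of_encard_eq_coe (hp x)).toFinset, Finsupp.single e' (t / k))
      = Finsupp.single x t := by
    intro x t
    rw [map_sum]
    have h3 : ∀ e' ∈ (Set.finite_of_encard_eq_coe (hp x)).toFinset,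
        (Finsupp.mapDomain.addMonoidHom p : (E →₀ ℝ) →+ (X →₀ ℝ))
          (Finsupp.single e' (t / k)) = Finsupp.single x (t / k) := by
      intro e' he'
      rw [Finsupp.mapDomain.addMonoidHom_apply, Finsupp.mapDomain_single]
      congr 1
      simpa using (Set.Finite.mem_toFinset _).mp he'
    rw [Finset.sum_congr rfl h3, Finset.sum_const, fiber_card p k hp x,
      Finsupp.smul_single, nsmul_eq_mul, mul_div_cancel₀]
    exact_mod_cast hk.ne'
  calc (μ.1.sum fun x t =>
        (Finsupp.mapDomain.addMonoidHom p : (E →₀ ℝ) →+ (X →₀ ℝ))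
          (∑ e' ∈ (Set.finite_of_encard_eq_coe (hp x)).toFinset, Finsupp.single e' (t / k)))
      = μ.1.sum fun x t => Finsupp.single x t :=
        Finsupp.sum_congr fun x _ => h2 x (μ.1 x)
    _ = μ.1 := Finsupp.sum_single μ.1

lemma coveringPullback_supp_le (p : E → X) (k : ℕ) (hk : 0 < k)
    (hp : ∀ x, (p ⁻¹' {x}).encard = (k : ℕ∞)) (n : ℕ) (μ : FinProb X)
    (hμ : μ.supp.card ≤ n) :
    (coveringPullback p k hk hp μ).supp.card ≤ k * n := by
  classical
  have hsub : (coveringPullback p k hk hp μ).supp ⊆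
      μ.supp.biUnion fun x => (Set.finite_of_encard_eq_coe (hp x)).toFinset := by
    intro e he
    have h1 : (coveringPullback p k hk hp μ).1 e ≠ 0 := Finsupp.mem_support_iff.mp he
    rw [coveringPullback_weight p k hk hp μ e] at h1
    have h2 : μ.1 (p e) ≠ 0 := fun h => h1 (by rw [h, zero_div])
    exact Finset.mem_biUnion.mpr ⟨p e, Finsupp.mem_support_iff.mpr h2,
      (Set.Finite.mem_toFinset _).mpr rfl⟩
  calc (coveringPullback p k hk hp μ).supp.card
      ≤ (μ.supp.biUnion fun x => (Set.finite_of_encard_eq_coe (hp x)).toFinset).card :=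
        Finset.card_le_card hsub
    _ ≤ ∑ x ∈ μ.supp, (Set.finite_of_encard_eq_coe (hp x)).toFinset.card :=
        Finset.card_biUnion_le
    _ = ∑ _x ∈ μ.supp, k := Finset.sum_congr rfl fun x _ => fiber_card p k hp x
    _ = μ.supp.card * k := by rw [Finset.sum_const, smul_eq_mul]
    _ ≤ n * k := Nat.mul_le_mul_right k hμ
    _ = k * n := Nat.mul_comm n k
end Aux2
section Aux3
variable {E : Type u} {X : Type v} [TopologicalSpace E] [TopologicalSpace X]

/-- The index equivalence `Fin ((n+1)*k - 1 + 1) ≃ Fin (n+1) × Fin k` (for `0 < k`). -/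
def pbIdx (n k : ℕ) (hk : 0 < k) : Fin ((n + 1) * k - 1 + 1) ≃ Fin (n + 1) × Fin k :=
  (finCongr (Nat.succ_pred_eq_of_pos (Nat.mul_pos n.succ_pos hk))).trans finProdFinEquiv.symm

/-- A presentation of the pulled-back measure. -/
def pullbackPre (k : ℕ) (hk : 0 < k) (n : ℕ) (pts : Fin (n + 1) → Fin k → E)
    (t : stdSimplex ℝ (Fin (n + 1))) : PreProb E :=
  ⟨(n + 1) * k - 1,
    (fun m => pts (pbIdx n k hk m).1 (pbIdx n k hk m).2,
     ⟨fun m => t.1 (pbIdx n k hk m).1 / k, by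
        constructor
        · intro m
          exact div_nonneg (t.2.1 _) (Nat.cast_nonneg k)
        · rw [← Equiv.sum_comp (pbIdx n k hk).symm fun m => t.1 (pbIdx n k hk m).1 / k]
          simp only [Equiv.apply_symm_apply]
          rw [Fintype.sum_prod_type]
          have : ∀ i : Fin (n + 1), (∑ _j : Fin k, t.1 i / k) = t.1 i := by
            intro i
            rw [Finset.sum_const, Finset.card_univ, Fintype.card_fin, nsmul_eq_mul,
              mul_div_cancel₀]
            exact_mod_cast hk.ne'
          rw [Finset.sum_congr rfl fun i _ => this i]
          exact t.2.2⟩)⟩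

lemma toFinProb_fst {n : ℕ} (x : Fin (n + 1) → X) (t : stdSimplex ℝ (Fin (n + 1))) :
    (PreProb.toFinProb (⟨n, (x, t)⟩ : PreProb X)).1 =
      ∑ i, Finsupp.single (x i) (t.1 i) := rfl

lemma coveringPullback_toFinProb (p : E → X) (k : ℕ) (hk : 0 < k)
    (hp : ∀ x, (p ⁻¹' {x}).encard = (k : ℕ∞)) (n : ℕ)
    (x : Fin (n + 1) → X) (t : stdSimplex ℝ (Fin (n + 1)))
    (pts : Fin (n + 1) → Fin k → E)
    (hptsp : ∀ i j, p (pts i j) = x i)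
    (hptsi : ∀ i, Function.Injective (pts i)) :
    coveringPullback p k hk hp (PreProb.toFinProb ⟨n, (x, t)⟩) =
      PreProb.toFinProb (pullbackPre k hk n pts t) := by
  classical
  apply Subtype.ext
  apply Finsupp.ext
  intro e
  rw [coveringPullback_weight p k hk hp _ e, toFinProb_fst]
  have hrhs : (PreProb.toFinProb (pullbackPre k hk n pts t)).1 =
      ∑ m, Finsupp.single (pts (pbIdx n k hk m).1 (pbIdx n k hk m).2)
        (t.1 (pbIdx n k hk m).1 / k) := rfl
  rw [hrhs]
  rw [Finsupp.finset_sum_apply, Finsupp.finset_sum_apply]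
  rw [← Equiv.sum_comp (pbIdx n k hk).symm
    (fun m => (Finsupp.single (pts (pbIdx n k hk m).1 (pbIdx n k hk m).2)
      (t.1 (pbIdx n k hk m).1 / k)) e)]
  simp only [Equiv.apply_symm_apply]
  rw [Fintype.sum_prod_type, Finset.sum_div]
  refine Finset.sum_congr rfl fun i _ => ?_
  simp only [Finsupp.single_apply]
  by_cases hxe : x i = p e
  · -- e is in the fiber over x i; exactly one j has pts i j = e
    have hmem : e ∈ p ⁻¹' {x i} := by simp [hxe.symm]
    -- range of pts i = fiber
    have hrange : Set.range (pts i) = p ⁻¹' {x i} := by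
      have hsub : Set.range (pts i) ⊆ p ⁻¹' {x i} := by
        rintro _ ⟨j, rfl⟩; simp [hptsp i j]
      have hencard : (Set.range (pts i)).encard = (k : ℕ∞) := by
        rw [Set.encard_eq_coe_toFinset_card]
        congr 1
        rw [Set.toFinset_range, Finset.card_image_of_injective _ (hptsi i)]
        simp
      exact (Set.finite_of_encard_eq_coe (hp (x i))).eq_of_subset_of_encard_le' hsub
        (by rw [hencard, hp])
    obtain ⟨j₀, hj₀⟩ := hrange ▸ hmem
    have huniq : ∀ j, pts i j = e ↔ j = j₀ := by
      intro j
      constructor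
      · intro h; exact hptsi i (h.trans hj₀.symm)
      · rintro rfl; exact hj₀
    rw [if_pos hxe]
    refine (?_ : (∑ j, if pts i j = e then (t.1 i / k : ℝ) else 0) = t.1 i / k).symm
    calc (∑ j, if pts i j = e then (t.1 i / k : ℝ) else 0)
        = ∑ j, if j = j₀ then (t.1 i / k : ℝ) else 0 :=
          Finset.sum_congr rfl fun j _ => if_congr (huniq j) rfl rfl
      _ = t.1 i / k := by rw [Finset.sum_ite_eq' Finset.univ j₀ fun _ => (t.1 i / k : ℝ)]; simp
  · rw [if_neg hxe, zero_div]
    refine (Finset.sum_eq_zero fun j _ => ?_).symm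
    rw [if_neg]
    intro h
    exact hxe (by rw [← hptsp i j, h])
end Aux3
/-- For a degree-`k` covering map `p : E → X`, the assignment
`μ ↦ (1/k) ∑_{x ∈ supp μ} ∑_{x̃ ∈ p⁻¹(x)} μ(x) δ_{x̃}` defines a continuous map
`p^* : 𝒫(X) → 𝒫(E)` which is a section of `p_*`, and `p^*(𝒫ₙ(X)) ⊆ 𝒫_{kn}(E)`. -/
theorem coveringPullback_continuous_section {E X : Type u}
    [TopologicalSpace E] [TopologicalSpace X] [T2Space E] [T2Space X]
    [CompactlyGeneratedSpace E] [CompactlyGeneratedSpace X]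
    (p : E → X) (k : ℕ) (hk : 0 < k) (hcov : IsCoveringOfDegree p k) :
    (∀ (μ : FinProb X) (e : E),
        (coveringPullback p k hk hcov.2 μ).weight e = μ.weight (p e) / k) ∧
    Continuous (coveringPullback p k hk hcov.2) ∧
    (∀ μ : FinProb X, FinProb.map p (coveringPullback p k hk hcov.2 μ) = μ) ∧
    (∀ (n : ℕ) (μ : FinProb X), μ ∈ FinProbLe X n →
        coveringPullback p k hk hcov.2 μ ∈ FinProbLe E (k * n)) := by
  classical
  refine ⟨fun μ e => coveringPullback_weight p k hk hcov.2 μ e, ?_,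
    fun μ => coveringPullback_map p k hk hcov.2 μ,
    fun n μ hμ => coveringPullback_supp_le p k hk hcov.2 n μ hμ⟩
  -- Continuity
  refine continuous_coinduced_dom.mpr ?_
  refine continuous_sigma_iff.mpr fun n => ?_
  rw [continuous_iff_continuousAt]
  rintro ⟨x₀, t₀⟩
  -- choose trivializations around each point of the tuple x₀
  have hT : ∀ i : Fin (n + 1), ∃ T : Bundle.Trivialization (↑(p ⁻¹' {x₀ i})) p,
      x₀ i ∈ T.baseSet :=
    fun i => by
      haveI : Nonempty ↑(p ⁻¹' {x₀ i}) := (Set.nonempty_of_encard_ne_zero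
        (by rw [hcov.2]; exact_mod_cast hk.ne')).to_subtype
      exact ⟨(hcov.1 (x₀ i)).toTrivialization,
        IsEvenlyCovered.mem_toTrivialization_baseSet _⟩
  choose T hTmem using hT
  -- enumerate the reference fibers
  haveI hFin : ∀ i : Fin (n + 1), Fintype ↑(p ⁻¹' {x₀ i}) :=
    fun i => (Set.finite_of_encard_eq_coe (hcov.2 (x₀ i))).fintype
  have hcard : ∀ i : Fin (n + 1), Fintype.card ↑(p ⁻¹' {x₀ i}) = k := by
    intro i
    have h := hcov.2 (x₀ i)
    rw [Set.encard_eq_coe_toFinset_card, Set.toFinset_card] at h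
    exact_mod_cast h
  let idx : ∀ i : Fin (n + 1), Fin k ≃ ↑(p ⁻¹' {x₀ i}) :=
    fun i => (Fintype.equivFinOfCardEq (hcard i)).symm
  -- the locally-defined lifted presentation
  let pts : ((Fin (n + 1) → X) × stdSimplex ℝ (Fin (n + 1))) → Fin (n + 1) → Fin k → E :=
    fun z i j => (T i).toOpenPartialHomeomorph.symm (z.1 i, idx i j)
  let H : ((Fin (n + 1) → X) × stdSimplex ℝ (Fin (n + 1))) → FinProb E :=
    fun z => PreProb.toFinProb (pullbackPre k hk n (pts z) z.2)
  set W : Set ((Fin (n + 1) → X) × stdSimplex ℝ (Fin (n + 1))) :=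
    {z | ∀ i, z.1 i ∈ (T i).baseSet} with hW
  have hWopen : IsOpen W := by
    have h : W = ⋂ i, (fun z : (Fin (n + 1) → X) × stdSimplex ℝ (Fin (n + 1)) =>
        z.1 i) ⁻¹' (T i).baseSet := by
      ext z; simp [hW, Set.mem_iInter]
    rw [h]
    exact isOpen_iInter_of_finite fun i =>
      ((T i).open_baseSet).preimage ((continuous_apply i).comp continuous_fst)
  have hz₀W : ((x₀, t₀) : (Fin (n + 1) → X) × stdSimplex ℝ (Fin (n + 1))) ∈ W :=
    fun i => hTmem i
  -- H is continuous at (x₀, t₀)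
  have hHcont : ContinuousAt H (x₀, t₀) := by
    have hmk : Continuous (fun a : (Fin ((n + 1) * k - 1 + 1) → E) ×
        stdSimplex ℝ (Fin ((n + 1) * k - 1 + 1)) =>
        PreProb.toFinProb (⟨(n + 1) * k - 1, a⟩ : PreProb E)) := by
      exact Continuous.comp (g := PreProb.toFinProb (X := E))
        continuous_coinduced_rng (continuous_sigmaMk (i := (n + 1) * k - 1))
    have hP : ContinuousAt (fun z : (Fin (n + 1) → X) × stdSimplex ℝ (Fin (n + 1)) =>
        fun m => pts z (pbIdx n k hk m).1 (pbIdx n k hk m).2) (x₀, t₀) := by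
      rw [continuousAt_pi]
      intro m
      set i := (pbIdx n k hk m).1
      set j := (pbIdx n k hk m).2
      have hmemT : ((x₀ i, idx i j) : X × ↑(p ⁻¹' {x₀ i})) ∈
          (T i).toOpenPartialHomeomorph.target :=
        (T i).mem_target.mpr (hTmem i)
      have hsymm : ContinuousAt (T i).toOpenPartialHomeomorph.symm (x₀ i, idx i j) :=
        ((T i).toOpenPartialHomeomorph.continuousOn_symm).continuousAt
          ((T i).toOpenPartialHomeomorph.open_target.mem_nhds hmemT)
      have hinner : ContinuousAt (fun z : (Fin (n + 1) → X) × stdSimplex ℝ (Fin (n + 1)) =>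
          ((z.1 i, idx i j) : X × ↑(p ⁻¹' {x₀ i}))) (x₀, t₀) :=
        (((continuous_apply i).comp continuous_fst).prodMk continuous_const).continuousAt
      show ContinuousAt (fun z : (Fin (n + 1) → X) × stdSimplex ℝ (Fin (n + 1)) =>
        (T i).toOpenPartialHomeomorph.symm ((z.1 i, idx i j) : X × ↑(p ⁻¹' {x₀ i}))) (x₀, t₀)
      exact ContinuousAt.comp (x := ((x₀, t₀) :
        (Fin (n + 1) → X) × stdSimplex ℝ (Fin (n + 1)))) hsymm hinner
    have hQ : ContinuousAt (fun z : (Fin (n + 1) → X) × stdSimplex ℝ (Fin (n + 1)) =>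
        (show ↥(stdSimplex ℝ (Fin ((n + 1) * k - 1 + 1))) from
          (pullbackPre k hk n (pts z) z.2).2.2)) (x₀, t₀) := by
      refine Continuous.continuousAt ?_
      refine Continuous.subtype_mk ?_ _
      refine continuous_pi fun m => ?_
      exact ((continuous_apply ((pbIdx n k hk) m).1).comp
        (continuous_subtype_val.comp continuous_snd)).div_const _
    exact (hmk.continuousAt.comp (hP.prodMk hQ) : _)
  -- conclude by local agreement
  refine hHcont.congr ?_
  refine Filter.eventuallyEq_of_mem (hWopen.mem_nhds hz₀W) fun z hz => ?_
  have hmemT : ∀ i j, ((z.1 i, idx i j) : X × ↑(p ⁻¹' {x₀ i})) ∈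
      (T i).toOpenPartialHomeomorph.target :=
    fun i j => (T i).mem_target.mpr (hz i)
  have hptsp : ∀ i j, p (pts z i j) = z.1 i :=
    fun i j => (T i).proj_symm_apply (hmemT i j)
  have hptsi : ∀ i, Function.Injective (pts z i) := by
    intro i j₁ j₂ hjj
    have h1 := (T i).toOpenPartialHomeomorph.symm.injOn
      (by rw [OpenPartialHomeomorph.symm_source]; exact hmemT i j₁)
      (by rw [OpenPartialHomeomorph.symm_source]; exact hmemT i j₂) hjj
    have h2 : idx i j₁ = idx i j₂ := by
      simpa using congrArg Prod.snd h1
    exact (idx i).injective h2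
  exact (coveringPullback_toFinProb p k hk hcov.2 n z.1 z.2 (pts z) hptsp hptsi).symm
end
end
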